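/- For exponential family distributions P1, P2 with parameters θ1, θ2 in a family where sup_θ λ_max(E_θ[xx^⊤]) ≤ λ_max, if ||θ1 − θ2||² ≤ 4/λ_max then the Bhattacharyya coefficient satisfies BC(P1, P2) ≥ 1/2. -/

import Mathlib

open MeasureTheory

lemma sinh_le_mul_cosh' {t : ℝ} (ht : 0 ≤ t) : Real.sinh t ≤ t * Real.cosh t := by
  have key : MonotoneOn (fun t => t * Real.cosh t - Real.sinh t) (Set.Ici 0) := by
    apply monotoneOn_of_deriv_nonneg (convex_Ici 0)
    · exact (Continuous.sub (continuous_id.mul Real.continuous_cosh) Real.continuous_sinh).continuousOn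
    · intro x hx
      exact (((hasDerivAt_id x).mul (Real.hasDerivAt_cosh x)).sub (Real.hasDerivAt_sinh x)).differentiableAt.differentiableWithinAt
    · intro x hx
      rw [interior_Ici] at hx
      have hd : HasDerivAt (fun t => t * Real.cosh t - Real.sinh t)
          (1 * Real.cosh x + x * Real.sinh x - Real.cosh x) x :=
        ((hasDerivAt_id x).mul (Real.hasDerivAt_cosh x)).sub (Real.hasDerivAt_sinh x)
      rw [hd.deriv]
      have h1 : 0 ≤ Real.sinh x := Real.sinh_nonneg_iff.2 (le_of_lt hx)
      have h2 : 0 ≤ x * Real.sinh x := mul_nonneg (le_of_lt hx) h1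
      linarith
  have := key (Set.self_mem_Ici) (Set.mem_Ici.2 ht) ht
  simp at this
  linarith

lemma sinh_sq_le' {t : ℝ} : Real.sinh t ^ 2 ≤ t ^ 2 * Real.cosh t ^ 2 := by
  rcases le_or_gt 0 t with h | h
  · have h1 := sinh_le_mul_cosh' h
    have h2 : 0 ≤ Real.sinh t := Real.sinh_nonneg_iff.2 h
    nlinarith [Real.cosh_pos t]
  · have h1 := sinh_le_mul_cosh' (neg_nonneg.2 h.le)
    rw [Real.sinh_neg, Real.cosh_neg] at h1
    have h2 : 0 ≤ -Real.sinh t := by rw [← Real.sinh_neg]; exact Real.sinh_nonneg_iff.2 (by linarith)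
    nlinarith [Real.cosh_pos t]

lemma sq_le_sinh_sq' {t : ℝ} : t ^ 2 ≤ Real.sinh t ^ 2 := by
  rcases le_or_gt 0 t with h | h
  · have := Real.self_le_sinh_iff.2 h
    nlinarith
  · have h0 : (0:ℝ) ≤ -t := by linarith
    have := Real.self_le_sinh_iff.2 h0
    rw [Real.sinh_neg] at this
    nlinarith

lemma cosh_half' (y : ℝ) : Real.cosh y = 2 * Real.sinh (y/2) ^ 2 + 1 ∧
    Real.cosh y = 2 * Real.cosh (y/2) ^ 2 - 1 := by
  have h := Real.cosh_two_mul (y/2)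
  rw [show (2:ℝ) * (y/2) = y by ring] at h
  have hcs := Real.cosh_sq (y/2)
  constructor <;> linarith

lemma sq_le_two_cosh' (y : ℝ) : y ^ 2 ≤ Real.exp y + Real.exp (-y) := by
  obtain ⟨h3, _⟩ := cosh_half' y
  have h4 : (y/2)^2 ≤ Real.sinh (y/2)^2 := sq_le_sinh_sq'
  have h5 : Real.cosh y = (Real.exp y + Real.exp (-y)) / 2 := Real.cosh_eq y
  nlinarith

lemma cosh_key' (y : ℝ) :
    Real.exp y + Real.exp (-y) ≤ 2 + y ^ 2 / 2 * (Real.exp y + Real.exp (-y)) := by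
  obtain ⟨h3, h1⟩ := cosh_half' y
  have h2 := sinh_sq_le' (t := y/2)
  have h4 := Real.one_le_cosh y
  have h5 : Real.cosh y = (Real.exp y + Real.exp (-y)) / 2 := Real.cosh_eq y
  nlinarith [sq_nonneg y, mul_nonneg (sq_nonneg y) (sub_nonneg.2 h4)]

theorem bhattacharyya_lower_bound {d : ℕ}
    (h : (Fin d → ℝ) → ℝ) (hh : ∀ x, 0 ≤ h x)
    (Z : (Fin d → ℝ) → ℝ)
    (hZ : ∀ θ, Z θ = ∫ x, h x * Real.exp (∑ i, θ i * x i))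
    (hZpos : ∀ θ, 0 < Z θ)
    (p : (Fin d → ℝ) → (Fin d → ℝ) → ℝ)
    (hp : ∀ θ x, p θ x = h x * Real.exp ((∑ i, θ i * x i) - Real.log (Z θ)))
    (lammax : ℝ) (hlam : 0 < lammax)
    (hmom : ∀ θ (v : Fin d → ℝ), ∑ i, v i ^ 2 = 1 →
      ∫ x, p θ x * (∑ i, v i * x i) ^ 2 ≤ lammax)
    (θ1 θ2 : Fin d → ℝ)
    (hdist : ∑ i, (θ1 i - θ2 i) ^ 2 ≤ 4 / lammax) :
    (1 / 2 : ℝ) ≤ ∫ x, Real.sqrt (p θ1 x * p θ2 x) := by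
  classical
  have key_int : ∀ θ : Fin d → ℝ,
      Integrable (fun x => h x * Real.exp (∑ i, θ i * x i)) := by
    intro θ
    by_contra hcon
    have h0 := integral_undef hcon
    rw [← hZ θ] at h0
    exact (hZpos θ).ne' h0
  have hexp_nonneg : ∀ (θ : Fin d → ℝ) x, 0 ≤ h x * Real.exp (∑ i, θ i * x i) :=
    fun θ x => mul_nonneg (hh x) (Real.exp_pos _).le
  by_cases hθ : θ1 = θ2
  · -- degenerate case: BC = 1
    subst hθ
    have hps : ∀ x, 0 ≤ p θ1 x := fun x => by rw [hp]; exact mul_nonneg (hh x) (Real.exp_pos _).le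
    have hint : (fun x => Real.sqrt (p θ1 x * p θ1 x)) = fun x => p θ1 x := by
      funext x; rw [Real.sqrt_mul_self (hps x)]
    rw [hint]
    have hpe : (fun x => p θ1 x)
        = fun x => (h x * Real.exp (∑ i, θ1 i * x i)) * (Real.exp (Real.log (Z θ1)))⁻¹ := by
      funext x; rw [hp, Real.exp_sub]; ring
    rw [hpe, integral_mul_const, ← hZ θ1, Real.exp_log (hZpos θ1),
      mul_inv_cancel₀ (hZpos θ1).ne']
    norm_num
  · set m : Fin d → ℝ := fun i => (θ1 i + θ2 i) / 2 with hm
    set w : Fin d → ℝ := fun i => (θ1 i - θ2 i) / 2 with hw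
    set s : ℝ := ∑ i, w i ^ 2 with hs
    have hs_nonneg : 0 ≤ s := Finset.sum_nonneg fun i _ => sq_nonneg _
    have hs_pos : 0 < s := by
      rcases hs_nonneg.lt_or_eq with h' | h'
      · exact h'
      · exfalso; apply hθ; funext i
        have h2 := (Finset.sum_eq_zero_iff_of_nonneg
          (fun i _ => sq_nonneg (w i))).1 h'.symm i (Finset.mem_univ i)
        have h3 : w i = 0 := by nlinarith
        simp only [hw] at h3
        linarith
    -- sum splitting machinery
    have gen : ∀ (a b : Fin d → ℝ) (x : Fin d → ℝ),
        h x * Real.exp (∑ i, a i * x i) * Real.exp (∑ i, b i * x i)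
          = h x * Real.exp (∑ i, (a i + b i) * x i) := by
      intro a b x
      rw [mul_assoc, ← Real.exp_add]
      congr 2
      rw [← Finset.sum_add_distrib]
      exact Finset.sum_congr rfl fun i _ => by ring
    have hneg : ∀ x : Fin d → ℝ, Real.exp (-(∑ i, w i * x i)) = Real.exp (∑ i, (-w i) * x i) := by
      intro x
      congr 1
      rw [← Finset.sum_neg_distrib]
      exact Finset.sum_congr rfl fun i _ => by ring
    have key1 : ∀ x, h x * Real.exp (∑ i, m i * x i) * Real.exp (∑ i, w i * x i)
        = h x * Real.exp (∑ i, θ1 i * x i) := by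
      intro x
      rw [gen]
      congr 2
      exact Finset.sum_congr rfl fun i _ => by simp only [hm, hw]; ring
    have key2 : ∀ x, h x * Real.exp (∑ i, m i * x i) * Real.exp (-(∑ i, w i * x i))
        = h x * Real.exp (∑ i, θ2 i * x i) := by
      intro x
      rw [hneg, gen]
      congr 2
      exact Finset.sum_congr rfl fun i _ => by simp only [hm, hw]; ring
    -- key3 : Q1 * e^Y
    have key3 : ∀ x, h x * Real.exp (∑ i, θ1 i * x i) * Real.exp (∑ i, w i * x i)
        = h x * Real.exp (∑ i, (θ1 i + w i) * x i) := fun x => gen θ1 w x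
    have key4 : ∀ x, h x * Real.exp (∑ i, θ2 i * x i) * Real.exp (-(∑ i, w i * x i))
        = h x * Real.exp (∑ i, (θ2 i + -w i) * x i) := by
      intro x; rw [hneg]; exact gen θ2 (fun i => -w i) x
    have key5 : ∀ x, h x * Real.exp (∑ i, θ1 i * x i) * Real.exp (-(∑ i, w i * x i))
        = h x * Real.exp (∑ i, m i * x i) := by
      intro x
      rw [hneg, gen]
      congr 2
      exact Finset.sum_congr rfl fun i _ => by simp only [hm, hw]; ring
    have key6 : ∀ x, h x * Real.exp (∑ i, θ2 i * x i) * Real.exp (∑ i, w i * x i)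
        = h x * Real.exp (∑ i, m i * x i) := by
      intro x
      rw [gen]
      congr 2
      exact Finset.sum_congr rfl fun i _ => by simp only [hm, hw]; ring
    -- continuity of x ↦ (∑ w i x i)^2
    have hYc : Continuous fun x : Fin d → ℝ => (∑ i, w i * x i) ^ 2 :=
      (continuous_finset_sum Finset.univ fun i _ => continuous_const.mul (continuous_apply i)).pow 2
    -- integrability of second-moment integrands
    have int1 : Integrable (fun x =>
        (h x * Real.exp (∑ i, θ1 i * x i)) * (∑ i, w i * x i) ^ 2) := by
      refine Integrable.mono' ((key_int (fun i => θ1 i + w i)).add (key_int m))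
        ((key_int θ1).aestronglyMeasurable.mul hYc.aestronglyMeasurable)
        (Filter.Eventually.of_forall fun x => ?_)
      rw [Real.norm_eq_abs, abs_of_nonneg (mul_nonneg (hexp_nonneg θ1 x) (sq_nonneg _))]
      calc (h x * Real.exp (∑ i, θ1 i * x i)) * (∑ i, w i * x i) ^ 2
          ≤ (h x * Real.exp (∑ i, θ1 i * x i))
            * (Real.exp (∑ i, w i * x i) + Real.exp (-(∑ i, w i * x i))) :=
            mul_le_mul_of_nonneg_left (sq_le_two_cosh' _) (hexp_nonneg θ1 x)
        _ = h x * Real.exp (∑ i, (θ1 i + w i) * x i) + h x * Real.exp (∑ i, m i * x i) := by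
            rw [mul_add, key3 x, key5 x]
    have int2 : Integrable (fun x =>
        (h x * Real.exp (∑ i, θ2 i * x i)) * (∑ i, w i * x i) ^ 2) := by
      refine Integrable.mono' ((key_int m).add (key_int (fun i => θ2 i + -w i)))
        ((key_int θ2).aestronglyMeasurable.mul hYc.aestronglyMeasurable)
        (Filter.Eventually.of_forall fun x => ?_)
      rw [Real.norm_eq_abs, abs_of_nonneg (mul_nonneg (hexp_nonneg θ2 x) (sq_nonneg _))]
      calc (h x * Real.exp (∑ i, θ2 i * x i)) * (∑ i, w i * x i) ^ 2
          ≤ (h x * Real.exp (∑ i, θ2 i * x i))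
            * (Real.exp (∑ i, w i * x i) + Real.exp (-(∑ i, w i * x i))) :=
            mul_le_mul_of_nonneg_left (sq_le_two_cosh' _) (hexp_nonneg θ2 x)
        _ = h x * Real.exp (∑ i, m i * x i) + h x * Real.exp (∑ i, (θ2 i + -w i) * x i) := by
            rw [mul_add, key6 x, key4 x]
    -- moment bounds from hmom
    have hv : ∑ i, (w i / Real.sqrt s) ^ 2 = 1 := by
      have : ∀ i : Fin d, (w i / Real.sqrt s) ^ 2 = w i ^ 2 / s := by
        intro i; rw [div_pow, Real.sq_sqrt hs_nonneg]
      rw [Finset.sum_congr rfl fun i _ => this i, ← Finset.sum_div, ← hs,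
        div_self hs_pos.ne']
    have mom : ∀ θ : Fin d → ℝ,
        (∫ x, (h x * Real.exp (∑ i, θ i * x i)) * (∑ i, w i * x i) ^ 2)
          ≤ lammax * (Z θ * s) := by
      intro θ
      have hmm : ∫ x, p θ x * (∑ i, (w i / Real.sqrt s) * x i) ^ 2 ≤ lammax :=
        hmom θ (fun i => w i / Real.sqrt s) hv
      have hpt : ∀ x, p θ x * (∑ i, (w i / Real.sqrt s) * x i) ^ 2
          = (h x * Real.exp (∑ i, θ i * x i)) * (∑ i, w i * x i) ^ 2 * ((Z θ)⁻¹ * s⁻¹) := by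
        intro x
        rw [hp, Real.exp_sub, Real.exp_log (hZpos θ)]
        have hsum : (∑ i, (w i / Real.sqrt s) * x i) = (∑ i, w i * x i) / Real.sqrt s := by
          rw [Finset.sum_div]
          exact Finset.sum_congr rfl fun i _ => by ring
        rw [hsum, div_pow, Real.sq_sqrt hs_nonneg]
        field_simp
        try ring
      have heq : (∫ x, p θ x * (∑ i, (w i / Real.sqrt s) * x i) ^ 2)
          = (∫ x, (h x * Real.exp (∑ i, θ i * x i)) * (∑ i, w i * x i) ^ 2)
            * ((Z θ)⁻¹ * s⁻¹) := by
        rw [← integral_mul_const]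
        exact integral_congr_ae (Filter.Eventually.of_forall hpt)
      rw [heq] at hmm
      have hzs : 0 < Z θ * s := mul_pos (hZpos θ) hs_pos
      have h2 : (∫ x, (h x * Real.exp (∑ i, θ i * x i)) * (∑ i, w i * x i) ^ 2) / (Z θ * s)
          ≤ lammax := by
        rw [div_eq_mul_inv, mul_inv]; exact hmm
      calc (∫ x, (h x * Real.exp (∑ i, θ i * x i)) * (∑ i, w i * x i) ^ 2)
          = (∫ x, (h x * Real.exp (∑ i, θ i * x i)) * (∑ i, w i * x i) ^ 2) / (Z θ * s)
            * (Z θ * s) := by rw [div_mul_cancel₀ _ hzs.ne']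
        _ ≤ lammax * (Z θ * s) := mul_le_mul_of_nonneg_right h2 hzs.le
    -- main integral inequality
    have hle : (∫ x, (h x * Real.exp (∑ i, θ1 i * x i) + h x * Real.exp (∑ i, θ2 i * x i)))
        ≤ ∫ x, (2 * (h x * Real.exp (∑ i, m i * x i))
            + ((h x * Real.exp (∑ i, θ1 i * x i)) * (∑ i, w i * x i) ^ 2
              + (h x * Real.exp (∑ i, θ2 i * x i)) * (∑ i, w i * x i) ^ 2) / 2) := by
      apply integral_mono ((key_int θ1).add (key_int θ2))
        (((key_int m).const_mul 2).add ((int1.add int2).div_const 2))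
      intro x
      have hq0 : 0 ≤ h x * Real.exp (∑ i, m i * x i) := hexp_nonneg m x
      have hck := mul_le_mul_of_nonneg_left (cosh_key' (∑ i, w i * x i)) hq0
      have e1 := key1 x
      have e2 := key2 x
      simp only [Pi.add_apply]
      nlinarith [hck, e1, e2]
    have hg2 : Integrable (fun x =>
        ((h x * Real.exp (∑ i, θ1 i * x i)) * (∑ i, w i * x i) ^ 2
          + (h x * Real.exp (∑ i, θ2 i * x i)) * (∑ i, w i * x i) ^ 2) / 2) :=
      (int1.add int2).div_const 2
    rw [integral_add (key_int θ1) (key_int θ2),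
      integral_add ((key_int m).const_mul 2) hg2,
      integral_const_mul, integral_div, integral_add int1 int2,
      ← hZ θ1, ← hZ θ2, ← hZ m] at hle
    -- c ≤ 1
    have hseq : s = (∑ i, (θ1 i - θ2 i) ^ 2) / 4 := by
      rw [hs, Finset.sum_div]
      exact Finset.sum_congr rfl fun i _ => by simp only [hw]; ring
    have hsle : s ≤ 1 / lammax := by
      rw [hseq]
      calc (∑ i, (θ1 i - θ2 i) ^ 2) / 4 ≤ (4 / lammax) / 4 := by linarith
        _ = 1 / lammax := by ring
    have hc1 : lammax * s ≤ 1 := by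
      calc lammax * s ≤ lammax * (1 / lammax) := mul_le_mul_of_nonneg_left hsle hlam.le
        _ = 1 := by field_simp
    -- conclude Z θ1 + Z θ2 ≤ 4 Z m
    have hsum_le : Z θ1 + Z θ2 ≤ 4 * Z m := by
      have hm1 := mom θ1
      have hm2 := mom θ2
      have hZ12 : 0 < Z θ1 + Z θ2 := by linarith [hZpos θ1, hZpos θ2]
      nlinarith [mul_le_mul_of_nonneg_right hc1 hZ12.le]
    -- the Bhattacharyya coefficient
    have hqq : ∀ x : Fin d → ℝ, Real.exp (∑ i, θ1 i * x i) * Real.exp (∑ i, θ2 i * x i)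
        = Real.exp (∑ i, m i * x i) ^ 2 := by
      intro x
      rw [← Real.exp_add, sq, ← Real.exp_add]
      congr 1
      rw [← Finset.sum_add_distrib, ← Finset.sum_add_distrib]
      exact Finset.sum_congr rfl fun i _ => by simp only [hm]; ring
    have hpt : ∀ x, Real.sqrt (p θ1 x * p θ2 x)
        = (h x * Real.exp (∑ i, m i * x i)) / Real.sqrt (Z θ1 * Z θ2) := by
      intro x
      rw [hp, hp, Real.exp_sub, Real.exp_sub, Real.exp_log (hZpos θ1), Real.exp_log (hZpos θ2)]
      have hprod : (h x * (Real.exp (∑ i, θ1 i * x i) / Z θ1))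
          * (h x * (Real.exp (∑ i, θ2 i * x i) / Z θ2))
          = (h x * Real.exp (∑ i, m i * x i)) ^ 2 / (Z θ1 * Z θ2) := by
        calc (h x * (Real.exp (∑ i, θ1 i * x i) / Z θ1))
            * (h x * (Real.exp (∑ i, θ2 i * x i) / Z θ2))
            = h x ^ 2 * (Real.exp (∑ i, θ1 i * x i) * Real.exp (∑ i, θ2 i * x i))
              / (Z θ1 * Z θ2) := by ring
          _ = h x ^ 2 * Real.exp (∑ i, m i * x i) ^ 2 / (Z θ1 * Z θ2) := by rw [hqq x]
          _ = (h x * Real.exp (∑ i, m i * x i)) ^ 2 / (Z θ1 * Z θ2) := by ring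
      rw [hprod, Real.sqrt_div (sq_nonneg _), Real.sqrt_sq (hexp_nonneg m x)]
    have hBC : (∫ x, Real.sqrt (p θ1 x * p θ2 x)) = Z m / Real.sqrt (Z θ1 * Z θ2) := by
      rw [show (fun x => Real.sqrt (p θ1 x * p θ2 x))
          = fun x => (h x * Real.exp (∑ i, m i * x i)) / Real.sqrt (Z θ1 * Z θ2) from
        funext hpt]
      rw [integral_div, ← hZ m]
    rw [hBC]
    have h1 : 0 < Real.sqrt (Z θ1 * Z θ2) :=
      Real.sqrt_pos.2 (mul_pos (hZpos θ1) (hZpos θ2))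
    have h2 : Real.sqrt (Z θ1 * Z θ2) ≤ (Z θ1 + Z θ2) / 2 := by
      rw [show (Z θ1 + Z θ2) / 2 = Real.sqrt (((Z θ1 + Z θ2) / 2) ^ 2) from
        (Real.sqrt_sq (by linarith [hZpos θ1, hZpos θ2])).symm]
      exact Real.sqrt_le_sqrt (by nlinarith [sq_nonneg (Z θ1 - Z θ2)])
    rw [le_div_iff₀ h1]
    linarith [hZpos m]
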